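/- (Theorem 1: existence and uniqueness.) Let Θ₀ be a nonempty, convex, compact subset of L²(F) all of whose elements have E_F-mean zero. Then the population risk L_F attains its minimum on Θ₀, and the minimizer θ* ∈ Θ₀ is unique (as an element of L²(F)). -/

import Mathlib

open MeasureTheory

/-- The logistic function `σ(t) = 1/(1+e^{-t})`. -/
noncomputable def logistic (t : ℝ) : ℝ := 1 / (1 + Real.exp (-t))

/-- The pointwise cross-entropy loss `ℓ_p(t) = -p log σ(t) - (1-p) log σ(-t)`. -/
noncomputable def ceLoss (p t : ℝ) : ℝ :=
  -p * Real.log (logistic t) - (1 - p) * Real.log (logistic (-t))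

/-- The preference probability `p_F(x,y) = P_{Z∼F}{δ(Z,x) > δ(Z,y)}`. -/
noncomputable def prefProb {X : Type*} [MeasurableSpace X] (F : Measure X)
    (δ : X → X → ℝ) (x y : X) : ℝ :=
  (F {z | δ z y < δ z x}).toReal

/-- The population cross-entropy risk
`L_F(θ) = E_{X,Y i.i.d. ∼ F} [ℓ_{p_F(X,Y)}(θ(Y) - θ(X))]`. -/
noncomputable def popRisk {X : Type*} [MeasurableSpace X] (F : Measure X)
    (δ : X → X → ℝ) (θ : X → ℝ) : ℝ :=
  ∫ q, ceLoss (prefProb F δ q.1 q.2) (θ q.2 - θ q.1) ∂(F.prod F)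


lemma logistic_pos (t : ℝ) : 0 < logistic t := by
  unfold logistic; positivity

lemma logistic_lt_one (t : ℝ) : logistic t < 1 := by
  unfold logistic
  rw [div_lt_one (by positivity)]
  linarith [Real.exp_pos (-t)]

lemma log_logistic (t : ℝ) : Real.log (logistic t) = -Real.log (1 + Real.exp (-t)) := by
  unfold logistic
  rw [one_div, Real.log_inv]

lemma ceLoss_eq (p t : ℝ) :
    ceLoss p t = p * Real.log (1 + Real.exp (-t)) + (1 - p) * Real.log (1 + Real.exp t) := by
  unfold ceLoss
  rw [log_logistic, log_logistic, neg_neg]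
  ring

lemma hasDerivAt_aux1 (t : ℝ) :
    HasDerivAt (fun s : ℝ => 1 + Real.exp (-s)) (-Real.exp (-t)) t := by
  simpa using ((Real.hasDerivAt_exp (-t)).comp t ((hasDerivAt_id t).neg)).const_add 1

lemma hasDerivAt_ceLoss (p t : ℝ) :
    HasDerivAt (fun s => ceLoss p s) (logistic t - p) t := by
  have h1 := hasDerivAt_aux1 t
  have h2 : HasDerivAt (fun s : ℝ => 1 + Real.exp s) (Real.exp t) t :=
    (Real.hasDerivAt_exp t).const_add 1
  have H1 := (h1.log (by positivity)).const_mul p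
  have H2 := (h2.log (by positivity)).const_mul (1 - p)
  have H := H1.add H2
  simp only [Pi.add_def, ← ceLoss_eq] at H
  refine H.congr_deriv ?_
  unfold logistic
  rw [Real.exp_neg]
  have hu : (0:ℝ) < Real.exp t := Real.exp_pos t
  field_simp
  ring

lemma hasDerivAt_logistic (t : ℝ) :
    HasDerivAt logistic (Real.exp (-t) / (1 + Real.exp (-t)) ^ 2) t := by
  have h1 := (hasDerivAt_aux1 t).inv (by positivity)
  have : logistic = fun s : ℝ => (1 + Real.exp (-s))⁻¹ := by
    funext s; simp [logistic, one_div]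
  rw [this]
  refine h1.congr_deriv ?_
  ring

lemma strictConvexOn_ceLoss (p : ℝ) : StrictConvexOn ℝ Set.univ (ceLoss p) := by
  have hd : deriv (ceLoss p) = fun s => logistic s - p :=
    funext fun s => (hasDerivAt_ceLoss p s).deriv
  apply strictConvexOn_of_deriv2_pos convex_univ
  · exact (Differentiable.continuous fun s => (hasDerivAt_ceLoss p s).differentiableAt).continuousOn
  · intro t _
    have : deriv^[2] (ceLoss p) = deriv (deriv (ceLoss p)) := rfl
    rw [this, hd]
    have h2 : HasDerivAt (fun s => logistic s - p)
        (Real.exp (-t) / (1 + Real.exp (-t)) ^ 2) t := (hasDerivAt_logistic t).sub_const p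
    rw [h2.deriv]
    positivity

lemma lipschitz_ceLoss {p : ℝ} (h0 : 0 ≤ p) (h1 : p ≤ 1) : LipschitzWith 1 (ceLoss p) := by
  apply lipschitzWith_of_nnnorm_deriv_le (fun t => (hasDerivAt_ceLoss p t).differentiableAt)
  intro t
  rw [(hasDerivAt_ceLoss p t).deriv]
  rw [← NNReal.coe_le_coe, coe_nnnorm, Real.norm_eq_abs, NNReal.coe_one]
  rw [abs_le]
  constructor
  · linarith [logistic_pos t]
  · linarith [logistic_lt_one t]

lemma abs_ceLoss_le {p : ℝ} (h0 : 0 ≤ p) (h1 : p ≤ 1) (t : ℝ) :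
    |ceLoss p t| ≤ Real.log 2 + |t| := by
  have hz : ceLoss p 0 = Real.log 2 := by
    simp only [ceLoss_eq, neg_zero, Real.exp_zero]
    ring_nf
  have key : |ceLoss p t - Real.log 2| ≤ |t| := by
    have := (lipschitz_ceLoss h0 h1).dist_le_mul t 0
    rw [Real.dist_eq, Real.dist_eq, sub_zero, hz] at this
    simpa using this
  calc |ceLoss p t| = |(ceLoss p t - Real.log 2) + Real.log 2| := by ring_nf
    _ ≤ |ceLoss p t - Real.log 2| + |Real.log 2| := abs_add_le _ _
    _ ≤ Real.log 2 + |t| := by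
        rw [abs_of_nonneg (Real.log_nonneg one_le_two)]
        linarith

lemma continuous_ceLoss : Continuous fun q : ℝ × ℝ => ceLoss q.1 q.2 := by
  simp only [ceLoss_eq]
  have hA : Continuous fun q : ℝ × ℝ => Real.log (1 + Real.exp (-q.2)) :=
    ((continuous_const.add (Real.continuous_exp.comp continuous_snd.neg)).log
      (fun q => by show (1:ℝ) + Real.exp (-q.2) ≠ 0; positivity))
  have hB : Continuous fun q : ℝ × ℝ => Real.log (1 + Real.exp q.2) :=
    ((continuous_const.add (Real.continuous_exp.comp continuous_snd)).log
      (fun q => by show (1:ℝ) + Real.exp q.2 ≠ 0; positivity))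
  exact (continuous_fst.mul hA).add ((continuous_const.sub continuous_fst).mul hB)

section MT

variable {X : Type*} [MeasurableSpace X] (F : Measure X) [IsProbabilityMeasure F]
  (δ : X → X → ℝ)

lemma prefProb_nonneg (x y : X) : 0 ≤ prefProb F δ x y := ENNReal.toReal_nonneg

lemma prefProb_le_one (x y : X) : prefProb F δ x y ≤ 1 := by
  unfold prefProb
  have h : F {z | δ z y < δ z x} ≤ 1 := prob_le_one
  simpa using ENNReal.toReal_mono ENNReal.one_ne_top h

lemma measurable_prefProb (hδ : Measurable fun q : X × X => δ q.1 q.2) :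
    Measurable fun q : X × X => prefProb F δ q.1 q.2 := by
  have hs : MeasurableSet {zq : X × (X × X) | δ zq.1 zq.2.2 < δ zq.1 zq.2.1} := by
    apply measurableSet_lt
    · exact hδ.comp (measurable_fst.prodMk measurable_snd.snd)
    · exact hδ.comp (measurable_fst.prodMk measurable_snd.fst)
  exact (measurable_measure_prodMk_right hs).ennreal_toReal

lemma measurePreserving_fst' : MeasurePreserving (Prod.fst : X × X → X) (F.prod F) F :=
  ⟨measurable_fst, by simp⟩

lemma measurePreserving_snd' : MeasurePreserving (Prod.snd : X × X → X) (F.prod F) F :=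
  ⟨measurable_snd, by simp⟩

lemma aesm_integrand (hδ : Measurable fun q : X × X => δ q.1 q.2) (θ : X → ℝ)
    (hθ : AEStronglyMeasurable θ F) :
    AEStronglyMeasurable
      (fun q : X × X => ceLoss (prefProb F δ q.1 q.2) (θ q.2 - θ q.1)) (F.prod F) := by
  have h1 : AEStronglyMeasurable (fun q : X × X => θ q.1) (F.prod F) :=
    hθ.comp_quasiMeasurePreserving Measure.quasiMeasurePreserving_fst
  have h2 : AEStronglyMeasurable (fun q : X × X => θ q.2) (F.prod F) :=
    hθ.comp_quasiMeasurePreserving Measure.quasiMeasurePreserving_snd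
  have hp : AEStronglyMeasurable (fun q : X × X => prefProb F δ q.1 q.2) (F.prod F) :=
    (measurable_prefProb F δ hδ).aestronglyMeasurable
  have hpair : AEStronglyMeasurable
      (fun q : X × X => (prefProb F δ q.1 q.2, θ q.2 - θ q.1)) (F.prod F) :=
    hp.prodMk (h2.sub h1)
  exact continuous_ceLoss.comp_aestronglyMeasurable hpair

lemma integrable_integrand (hδ : Measurable fun q : X × X => δ q.1 q.2)
    (θ : Lp ℝ 2 F) :
    Integrable (fun q : X × X => ceLoss (prefProb F δ q.1 q.2) (θ q.2 - θ q.1))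
      (F.prod F) := by
  have hθi : Integrable θ F := (Lp.memLp θ).integrable one_le_two
  have h1 : Integrable (fun q : X × X => θ q.1) (F.prod F) :=
    ((measurePreserving_fst' F).integrable_comp hθi.aestronglyMeasurable).mpr hθi
  have h2 : Integrable (fun q : X × X => θ q.2) (F.prod F) :=
    ((measurePreserving_snd' F).integrable_comp hθi.aestronglyMeasurable).mpr hθi
  have hbound : Integrable
      (fun q : X × X => Real.log 2 + (|θ q.1| + |θ q.2|)) (F.prod F) :=
    (integrable_const (Real.log 2)).add (h1.norm.add h2.norm)
  refine hbound.mono' (aesm_integrand F δ hδ θ (Lp.aestronglyMeasurable θ)) ?_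
  filter_upwards with q
  rw [Real.norm_eq_abs]
  calc |ceLoss (prefProb F δ q.1 q.2) (θ q.2 - θ q.1)|
      ≤ Real.log 2 + |θ q.2 - θ q.1| :=
        abs_ceLoss_le (prefProb_nonneg F δ q.1 q.2) (prefProb_le_one F δ q.1 q.2) _
    _ ≤ Real.log 2 + (|θ q.1| + |θ q.2|) := by
        have h := abs_sub (θ q.2) (θ q.1)
        linarith

lemma popRisk_congr {θ θ' : X → ℝ} (h : θ =ᵐ[F] θ') :
    popRisk F δ θ = popRisk F δ θ' := by
  unfold popRisk
  apply integral_congr_ae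
  have h1 : (fun q : X × X => θ q.1) =ᵐ[F.prod F] fun q => θ' q.1 :=
    Measure.quasiMeasurePreserving_fst.ae_eq_comp h
  have h2 : (fun q : X × X => θ q.2) =ᵐ[F.prod F] fun q => θ' q.2 :=
    Measure.quasiMeasurePreserving_snd.ae_eq_comp h
  filter_upwards [h1, h2] with q e1 e2
  rw [e1, e2]


lemma integral_abs_le_norm (ψ : Lp ℝ 2 F) : ∫ x, |ψ x| ∂F ≤ ‖ψ‖ := by
  have hint : Integrable ψ F := (Lp.memLp ψ).integrable one_le_two
  have h1 : ENNReal.ofReal (∫ x, ‖ψ x‖ ∂F) = eLpNorm ψ 1 F := by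
    rw [ofReal_integral_norm_eq_lintegral_enorm hint, eLpNorm_one_eq_lintegral_enorm]
  have h2 : eLpNorm (⇑ψ) 1 F ≤ eLpNorm (⇑ψ) 2 F :=
    eLpNorm_le_eLpNorm_of_exponent_le (by norm_num) (Lp.aestronglyMeasurable ψ)
  have h3 : (eLpNorm (⇑ψ) 1 F).toReal ≤ (eLpNorm (⇑ψ) 2 F).toReal :=
    ENNReal.toReal_mono (Lp.eLpNorm_ne_top ψ) h2
  rw [Lp.norm_def]
  have h4 : (∫ x, |ψ x| ∂F) = (ENNReal.ofReal (∫ x, ‖ψ x‖ ∂F)).toReal := by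
    rw [ENNReal.toReal_ofReal (by positivity)]
    simp [Real.norm_eq_abs]
  rw [h4, h1]
  exact h3

lemma integral_comp_fst (g : X → ℝ) (hg : AEStronglyMeasurable g F) :
    ∫ q : X × X, g q.1 ∂(F.prod F) = ∫ x, g x ∂F := by
  have hg' : AEStronglyMeasurable g (Measure.map Prod.fst (F.prod F)) := by
    rw [(measurePreserving_fst' F).map_eq]; exact hg
  conv_rhs => rw [← (measurePreserving_fst' F).map_eq]
  exact (integral_map measurable_fst.aemeasurable hg').symm

lemma integral_comp_snd (g : X → ℝ) (hg : AEStronglyMeasurable g F) :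
    ∫ q : X × X, g q.2 ∂(F.prod F) = ∫ x, g x ∂F := by
  have hg' : AEStronglyMeasurable g (Measure.map Prod.snd (F.prod F)) := by
    rw [(measurePreserving_snd' F).map_eq]; exact hg
  conv_rhs => rw [← (measurePreserving_snd' F).map_eq]
  exact (integral_map measurable_snd.aemeasurable hg').symm

lemma popRisk_lipschitz (hδ : Measurable fun q : X × X => δ q.1 q.2) :
    LipschitzWith 2 (fun θ : Lp ℝ 2 F => popRisk F δ ⇑θ) := by
  apply LipschitzWith.of_dist_le_mul
  intro θ₁ θ₂
  have I₁ := integrable_integrand F δ hδ θ₁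
  have I₂ := integrable_integrand F δ hδ θ₂
  set ψ : Lp ℝ 2 F := θ₁ - θ₂ with hψ
  have hψae : ⇑ψ =ᵐ[F] ⇑θ₁ - ⇑θ₂ := Lp.coeFn_sub θ₁ θ₂
  have hψint : Integrable ψ F := (Lp.memLp ψ).integrable one_le_two
  have hψsm : AEStronglyMeasurable (fun x => |ψ x|) F := (Lp.aestronglyMeasurable ψ).norm
  have hg1 : Integrable (fun q : X × X => |ψ q.1|) (F.prod F) :=
    ((measurePreserving_fst' F).integrable_comp hψint.norm.aestronglyMeasurable).mpr hψint.norm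
  have hg2 : Integrable (fun q : X × X => |ψ q.2|) (F.prod F) :=
    ((measurePreserving_snd' F).integrable_comp hψint.norm.aestronglyMeasurable).mpr hψint.norm
  have hptae : ∀ᵐ q ∂(F.prod F),
      ‖(fun q : X × X => ceLoss (prefProb F δ q.1 q.2) (θ₁ q.2 - θ₁ q.1)) q -
        (fun q : X × X => ceLoss (prefProb F δ q.1 q.2) (θ₂ q.2 - θ₂ q.1)) q‖ ≤
      |ψ q.1| + |ψ q.2| := by
    have e1 : (fun q : X × X => ψ q.1) =ᵐ[F.prod F] fun q => θ₁ q.1 - θ₂ q.1 :=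
      Measure.quasiMeasurePreserving_fst.ae_eq_comp hψae
    have e2 : (fun q : X × X => ψ q.2) =ᵐ[F.prod F] fun q => θ₁ q.2 - θ₂ q.2 :=
      Measure.quasiMeasurePreserving_snd.ae_eq_comp hψae
    filter_upwards [e1, e2] with q hq1 hq2
    have hp0 := prefProb_nonneg F δ q.1 q.2
    have hp1 := prefProb_le_one F δ q.1 q.2
    have hl := (lipschitz_ceLoss hp0 hp1).dist_le_mul (θ₁ q.2 - θ₁ q.1) (θ₂ q.2 - θ₂ q.1)
    rw [Real.dist_eq, Real.dist_eq] at hl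
    simp only [Real.norm_eq_abs, NNReal.coe_one, one_mul] at hl ⊢
    calc |ceLoss (prefProb F δ q.1 q.2) (θ₁ q.2 - θ₁ q.1) -
          ceLoss (prefProb F δ q.1 q.2) (θ₂ q.2 - θ₂ q.1)|
        ≤ |θ₁ q.2 - θ₁ q.1 - (θ₂ q.2 - θ₂ q.1)| := hl
      _ = |(θ₁ q.2 - θ₂ q.2) - (θ₁ q.1 - θ₂ q.1)| := by ring_nf
      _ ≤ |θ₁ q.2 - θ₂ q.2| + |θ₁ q.1 - θ₂ q.1| := abs_sub _ _
      _ = |ψ q.1| + |ψ q.2| := by rw [hq1, hq2]; ring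
  have key : dist (popRisk F δ ⇑θ₁) (popRisk F δ ⇑θ₂) ≤
      ∫ q : X × X, (|ψ q.1| + |ψ q.2|) ∂(F.prod F) := by
    rw [Real.dist_eq]
    unfold popRisk
    rw [← integral_sub I₁ I₂]
    calc |∫ q : X × X, (ceLoss (prefProb F δ q.1 q.2) (θ₁ q.2 - θ₁ q.1) -
            ceLoss (prefProb F δ q.1 q.2) (θ₂ q.2 - θ₂ q.1)) ∂(F.prod F)|
        = ‖∫ q : X × X, (ceLoss (prefProb F δ q.1 q.2) (θ₁ q.2 - θ₁ q.1) -
            ceLoss (prefProb F δ q.1 q.2) (θ₂ q.2 - θ₂ q.1)) ∂(F.prod F)‖ :=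
          (Real.norm_eq_abs _).symm
      _ ≤ ∫ q : X × X, ‖ceLoss (prefProb F δ q.1 q.2) (θ₁ q.2 - θ₁ q.1) -
            ceLoss (prefProb F δ q.1 q.2) (θ₂ q.2 - θ₂ q.1)‖ ∂(F.prod F) :=
          norm_integral_le_integral_norm _
      _ ≤ ∫ q : X × X, (|ψ q.1| + |ψ q.2|) ∂(F.prod F) :=
          integral_mono_ae (I₁.sub I₂).norm (hg1.add hg2) hptae
  have hsplit : ∫ q : X × X, (|ψ q.1| + |ψ q.2|) ∂(F.prod F) = 2 * ∫ x, |ψ x| ∂F := by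
    rw [integral_add hg1 hg2, integral_comp_fst F (fun x => |ψ x|) hψsm,
      integral_comp_snd F (fun x => |ψ x|) hψsm]
    ring
  calc dist (popRisk F δ ⇑θ₁) (popRisk F δ ⇑θ₂)
      ≤ 2 * ∫ x, |ψ x| ∂F := by rw [← hsplit]; exact key
    _ ≤ 2 * ‖ψ‖ := by linarith [integral_abs_le_norm F ψ]
    _ = 2 * dist θ₁ θ₂ := by rw [dist_eq_norm]

end MT



/-- Theorem 1: existence and uniqueness: if `Θ₀` is a nonempty,
convex, compact subset of `L²(F)` all of whose elements have `F`-mean zero, then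
the population risk `L_F` attains its minimum on `Θ₀` at a unique `θ* ∈ Θ₀`. -/
theorem popRisk_exists_unique_minimizer {X : Type*} [MeasurableSpace X]
    (F : Measure X) [IsProbabilityMeasure F]
    (δ : X → X → ℝ) (hδ : Measurable fun q : X × X => δ q.1 q.2)
    (Θ₀ : Set (Lp ℝ 2 F)) (hne : Θ₀.Nonempty) (hconv : Convex ℝ Θ₀)
    (hcomp : IsCompact Θ₀) (hmean : ∀ θ ∈ Θ₀, (∫ x, θ x ∂F) = 0) :
    ∃! θs, θs ∈ Θ₀ ∧ ∀ θ ∈ Θ₀, popRisk F δ ⇑θs ≤ popRisk F δ ⇑θ := by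
  have hL : Continuous (fun θ : Lp ℝ 2 F => popRisk F δ ⇑θ) :=
    (popRisk_lipschitz F δ hδ).continuous
  obtain ⟨θb, hθb, hminb⟩ := hcomp.exists_isMinOn hne hL.continuousOn
  refine ⟨θb, ⟨hθb, fun θ hθ => hminb hθ⟩, ?_⟩
  rintro θa ⟨hθa, hmina⟩
  -- both are minimizers with the same value
  have hab : popRisk F δ ⇑θa = popRisk F δ ⇑θb :=
    le_antisymm (hmina θb hθb) (hminb hθa)
  -- the midpoint
  set θm : Lp ℝ 2 F := (2⁻¹ : ℝ) • θa + (2⁻¹ : ℝ) • θb with hθmdef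
  have hθm : θm ∈ Θ₀ := hconv hθa hθb (by norm_num) (by norm_num) (by norm_num)
  set φ : X → ℝ := fun x => 2⁻¹ * θa x + 2⁻¹ * θb x with hφdef
  have hmae : ⇑θm =ᵐ[F] φ := by
    have h1 := Lp.coeFn_add ((2⁻¹ : ℝ) • θa) ((2⁻¹ : ℝ) • θb)
    have h2 := Lp.coeFn_smul (2⁻¹ : ℝ) θa
    have h3 := Lp.coeFn_smul (2⁻¹ : ℝ) θb
    filter_upwards [h1, h2, h3] with x e1 e2 e3
    simp only [hθmdef, e1, Pi.add_apply, e2, e3, Pi.smul_apply, smul_eq_mul, hφdef]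
  -- integrands
  set fa : X × X → ℝ := fun q => ceLoss (prefProb F δ q.1 q.2) (θa q.2 - θa q.1) with hfa
  set fb : X × X → ℝ := fun q => ceLoss (prefProb F δ q.1 q.2) (θb q.2 - θb q.1) with hfb
  set g : X × X → ℝ := fun q => ceLoss (prefProb F δ q.1 q.2) (φ q.2 - φ q.1) with hg
  have Ia : Integrable fa (F.prod F) := integrable_integrand F δ hδ θa
  have Ib : Integrable fb (F.prod F) := integrable_integrand F δ hδ θb
  have Ig : Integrable g (F.prod F) := by
    refine (integrable_integrand F δ hδ θm).congr ?_
    have e1 := Measure.quasiMeasurePreserving_fst.ae_eq_comp (μ := F.prod F) hmae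
    have e2 := Measure.quasiMeasurePreserving_snd.ae_eq_comp (μ := F.prod F) hmae
    filter_upwards [e1, e2] with q u1 u2
    simp only [Function.comp] at u1 u2
    simp only [hg, u1, u2]
  set h : X × X → ℝ := fun q => 2⁻¹ * fa q + 2⁻¹ * fb q with hh
  have Ih : Integrable h (F.prod F) := (Ia.const_mul _).add (Ib.const_mul _)
  have harg : ∀ q : X × X, φ q.2 - φ q.1 =
      2⁻¹ * (θa q.2 - θa q.1) + 2⁻¹ * (θb q.2 - θb q.1) := by
    intro q; simp only [hφdef]; ring
  have hle : ∀ q, g q ≤ h q := by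
    intro q
    have hc := (strictConvexOn_ceLoss (prefProb F δ q.1 q.2)).convexOn.2
      (Set.mem_univ (θa q.2 - θa q.1)) (Set.mem_univ (θb q.2 - θb q.1))
      (by norm_num : (0:ℝ) ≤ 2⁻¹) (by norm_num : (0:ℝ) ≤ 2⁻¹) (by norm_num)
    simp only [smul_eq_mul] at hc
    simpa only [hg, hh, hfa, hfb, harg q] using hc
  -- ∫ g = ∫ h
  have hgφ : popRisk F δ φ = ∫ q, g q ∂(F.prod F) := rfl
  have hLm : popRisk F δ ⇑θm = ∫ q, g q ∂(F.prod F) := by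
    rw [popRisk_congr F δ hmae, hgφ]
  have hinth : ∫ q, h q ∂(F.prod F) = popRisk F δ ⇑θb := by
    simp only [hh]
    rw [integral_add (Ia.const_mul _) (Ib.const_mul _), integral_const_mul,
      integral_const_mul]
    have : ∫ q, fa q ∂(F.prod F) = popRisk F δ ⇑θa := rfl
    rw [this, hab]
    have : ∫ q, fb q ∂(F.prod F) = popRisk F δ ⇑θb := rfl
    rw [this]; ring
  have heq : ∫ q, g q ∂(F.prod F) = ∫ q, h q ∂(F.prod F) := by
    refine le_antisymm (integral_mono Ig Ih hle) ?_
    rw [hinth, ← hLm]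
    exact hminb hθm
  have hgh : g =ᵐ[F.prod F] h := (integral_eq_iff_of_ae_le Ig Ih (ae_of_all _ hle)).mp heq
  -- strict convexity forces equality of differences a.e.
  have hta : ∀ᵐ q ∂(F.prod F), θa q.2 - θa q.1 = θb q.2 - θb q.1 := by
    filter_upwards [hgh] with q hq
    by_contra hne2
    have hc := (strictConvexOn_ceLoss (prefProb F δ q.1 q.2)).2
      (Set.mem_univ (θa q.2 - θa q.1)) (Set.mem_univ (θb q.2 - θb q.1)) hne2
      (by norm_num : (0:ℝ) < 2⁻¹) (by norm_num : (0:ℝ) < 2⁻¹) (by norm_num)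
    simp only [smul_eq_mul] at hc
    rw [← harg q] at hc
    exact absurd hq (ne_of_lt hc)
  -- deduce θa = θb
  set Ψ : Lp ℝ 2 F := θa - θb with hΨdef
  have hΨae : ⇑Ψ =ᵐ[F] ⇑θa - ⇑θb := Lp.coeFn_sub θa θb
  have hΨprod : ∀ᵐ q ∂(F.prod F), Ψ q.2 = Ψ q.1 := by
    have e1 := Measure.quasiMeasurePreserving_fst.ae_eq_comp (μ := F.prod F) hΨae
    have e2 := Measure.quasiMeasurePreserving_snd.ae_eq_comp (μ := F.prod F) hΨae
    filter_upwards [e1, e2, hta] with q u1 u2 u3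
    simp only [Function.comp, Pi.sub_apply] at u1 u2
    rw [u1, u2]
    linarith
  have hae2 : ∀ᵐ x ∂F, ∀ᵐ y ∂F, Ψ y = Ψ x := Measure.ae_ae_of_ae_prod hΨprod
  haveI : (ae F).NeBot := ae_neBot.mpr (IsProbabilityMeasure.ne_zero F)
  obtain ⟨x₀, hx₀⟩ := hae2.exists
  have hconst : ⇑Ψ =ᵐ[F] fun _ => Ψ x₀ := hx₀
  have hInta : Integrable θa F := (Lp.memLp θa).integrable one_le_two
  have hIntb : Integrable θb F := (Lp.memLp θb).integrable one_le_two
  have hint0 : ∫ x, Ψ x ∂F = 0 := by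
    rw [integral_congr_ae hΨae]
    have : ∫ x, (⇑θa - ⇑θb) x ∂F = (∫ x, θa x ∂F) - ∫ x, θb x ∂F := by
      simp only [Pi.sub_apply]
      exact integral_sub hInta hIntb
    rw [this, hmean θa hθa, hmean θb hθb, sub_zero]
  have hx0 : Ψ x₀ = 0 := by
    have := integral_congr_ae hconst
    rw [hint0, integral_const] at this
    simpa [measure_univ] using this.symm
  have hzero : ⇑Ψ =ᵐ[F] ⇑(0 : Lp ℝ 2 F) := by
    filter_upwards [hconst, Lp.coeFn_zero ℝ 2 F] with x e1 e2
    rw [e1, hx0, e2]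
    rfl
  have : Ψ = 0 := Lp.ext hzero
  have := sub_eq_zero.mp (hΨdef ▸ this)
  exact this
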